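/- Let G = (V,E) be a finite simple graph and let the vertex set be partitioned into classes H₁, …, H_t, each of size at most k. Orient each edge e arbitrarily, with head h(e) and tail t(e), and let N⁺(v) denote the set of heads of edges with tail v. For each class H_i and each nonempty S ⊆ H_i, let G_S be the complete bipartite graph with partite sets S and T_S = {v ∈ V : N⁺(v) ∩ H_i = S} (discarded if T_S is empty). Then every G_S is a complete bipartite subgraph of G, the edge sets of the graphs G_S partition E (each edge e lies in exactly the graph G_S with S = N⁺(t(e)) ∩ H_i where h(e) ∈ H_i), and every vertex v with v ∈ H_i is contained in at most 2^(|H_i|−1) of the sets S and in at most t of the sets T_S. -/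

import Mathlib

/-- Given an orientation of the edges of `G` (recorded by `tail` and `head`
functions on unordered pairs), `Nplus G tail head v` is the set `N⁺(v)` of heads
of edges with tail `v`. -/
def Nplus {V : Type*} [Fintype V] [DecidableEq V] (G : SimpleGraph V)
    [DecidableRel G.Adj] (tail head : Sym2 V → V) (v : V) : Finset V :=
  (G.edgeFinset.filter fun e => tail e = v).image head

/-- For a class `H i` of the vertex partition and a set `S ⊆ H i`, the second
partite set `T_S = {v : N⁺(v) ∩ H i = S}` of the complete bipartite graph `G_S`. -/
def Tset {V : Type*} [Fintype V] [DecidableEq V] (G : SimpleGraph V)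
    [DecidableRel G.Adj] (tail head : Sym2 V → V) {t : ℕ} (H : Fin t → Finset V)
    (i : Fin t) (S : Finset V) : Finset V :=
  Finset.univ.filter fun v => Nplus G tail head v ∩ H i = S

section Aux
variable {V : Type*} [Fintype V] [DecidableEq V] (G : SimpleGraph V)
    [DecidableRel G.Adj] (tail head : Sym2 V → V)

lemma Nplus_key (horient : ∀ e ∈ G.edgeSet, e = s(tail e, head e))
    {a v : V} (ha : a ∈ Nplus G tail head v) :
    G.Adj v a ∧ tail (s(v, a)) = v ∧ head (s(v, a)) = a := by
  simp only [Nplus, Finset.mem_image, Finset.mem_filter] at ha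
  obtain ⟨e, ⟨he, hte⟩, hhe⟩ := ha
  rw [SimpleGraph.mem_edgeFinset] at he
  have hee : e = s(v, a) := by rw [horient e he, hte, hhe]
  subst hee
  rw [SimpleGraph.mem_edgeSet] at he
  exact ⟨he, hte, hhe⟩

end Aux

/-- **The basic bipartite decomposition.**  Let `G` be a finite simple graph whose
vertex set is partitioned into classes `H 0, …, H (t-1)`, each of size at most
`k`, and orient each edge `e` arbitrarily with tail `tail e` and head `head e`.
For each class `H i` and each nonempty `S ⊆ H i`, let `G_S` be the complete
bipartite graph with partite sets `S` and `T_S = {v : N⁺(v) ∩ H i = S}`.  Then: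
(1) every `G_S` (with `T_S` nonempty) is a complete bipartite subgraph of `G`
(its partite sets are disjoint and all cross pairs are edges of `G`);
(2) the edge sets of the graphs `G_S` partition the edge set of `G` — each edge
`e` lies exactly in the graph `G_S` with `S = N⁺(tail e) ∩ H i`, where `H i` is
the class containing `head e`;
(3) every vertex `v ∈ H i` is contained in at most `2^(|H i| - 1)` of the sets
`S` and in at most `t` of the sets `T_S`. -/
theorem bipartite_decomposition {V : Type*} [Fintype V] [DecidableEq V]
    (G : SimpleGraph V) [DecidableRel G.Adj]
    (t k : ℕ) (H : Fin t → Finset V)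
    (hdisj : ∀ i j : Fin t, i ≠ j → Disjoint (H i) (H j))
    (hcover : ∀ v : V, ∃ i, v ∈ H i)
    (hsize : ∀ i, (H i).card ≤ k)
    (tail head : Sym2 V → V)
    (horient : ∀ e ∈ G.edgeSet, e = s(tail e, head e)) :
    -- (1) each `G_S` is a complete bipartite subgraph of `G`
    (∀ (i : Fin t) (S : Finset V), S.Nonempty → S ⊆ H i →
      (Tset G tail head H i S).Nonempty →
      Disjoint S (Tset G tail head H i S) ∧
        ∀ a ∈ S, ∀ b ∈ Tset G tail head H i S, G.Adj a b) ∧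
    -- (2) the edge sets of the `G_S` partition the edge set of `G`
    (∀ e ∈ G.edgeSet, ∀ i : Fin t, head e ∈ H i →
      (∃ a ∈ Nplus G tail head (tail e) ∩ H i,
        ∃ b ∈ Tset G tail head H i (Nplus G tail head (tail e) ∩ H i),
          e = s(a, b)) ∧
      (∀ (j : Fin t) (S : Finset V), S.Nonempty → S ⊆ H j →
        (∃ a ∈ S, ∃ b ∈ Tset G tail head H j S, e = s(a, b)) →
        j = i ∧ S = Nplus G tail head (tail e) ∩ H i)) ∧
    -- (3) the load bounds
    (∀ (i : Fin t) (v : V), v ∈ H i →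
      (((Finset.univ.sigma fun j : Fin t =>
          (H j).powerset.filter fun S => S.Nonempty).filter
            fun x => v ∈ x.2).card ≤ 2 ^ ((H i).card - 1)) ∧
      (((Finset.univ.sigma fun j : Fin t =>
          (H j).powerset.filter fun S => S.Nonempty).filter
            fun x => v ∈ Tset G tail head H x.1 x.2).card ≤ t)) := by
  classical
  have key : ∀ {a v : V}, a ∈ Nplus G tail head v →
      G.Adj v a ∧ tail (s(v, a)) = v ∧ head (s(v, a)) = a :=
    fun ha => Nplus_key G tail head horient ha
  have idx : ∀ {i j : Fin t} {v : V}, v ∈ H i → v ∈ H j → i = j := by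
    intro i j v hi hj
    by_contra hne
    simpa using (hdisj i j hne).le_bot (by simp [Finset.mem_inter, hi, hj] :
      v ∈ H i ⊓ H j)
  refine ⟨?_, ?_, ?_⟩
  · -- (1)
    intro i S hSne hSsub hTne
    have hadj : ∀ a ∈ S, ∀ b ∈ Tset G tail head H i S, G.Adj a b := by
      intro a haS b hb
      simp only [Tset, Finset.mem_filter] at hb
      have : a ∈ Nplus G tail head b := by
        rw [← hb.2] at haS; exact (Finset.mem_inter.mp haS).1
      exact (key this).1.symm
    refine ⟨Finset.disjoint_left.mpr ?_, hadj⟩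
    intro a haS haT
    exact (G.irrefl (hadj a haS a haT)).elim
  · -- (2)
    intro e he i hi
    have he' := horient e he
    have hadj : G.Adj (tail e) (head e) := by
      rw [← SimpleGraph.mem_edgeSet, ← he']; exact he
    have hhN : head e ∈ Nplus G tail head (tail e) := by
      simp only [Nplus, Finset.mem_image, Finset.mem_filter]
      exact ⟨e, ⟨SimpleGraph.mem_edgeFinset.mpr he, rfl⟩, rfl⟩
    constructor
    · refine ⟨head e, Finset.mem_inter.mpr ⟨hhN, hi⟩, tail e, ?_, ?_⟩
      · simp [Tset]
      · rw [Sym2.eq_swap]; exact he'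
    · rintro j S hSne hSsub ⟨a, haS, b, hbT, heab⟩
      simp only [Tset, Finset.mem_filter] at hbT
      have hcases : (a = tail e ∧ b = head e) ∨ (a = head e ∧ b = tail e) := by
        have := he'.symm.trans heab
        rw [Sym2.eq_iff] at this
        tauto
      rcases hcases with ⟨ha, hb⟩ | ⟨ha, hb⟩
      · exfalso
        have haN : a ∈ Nplus G tail head b := by
          rw [← hbT.2] at haS; exact (Finset.mem_inter.mp haS).1
        have := (key haN).2.1
        rw [show s(b, a) = e by rw [Sym2.eq_swap, heab]] at this
        exact hadj.ne (this.trans hb)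
      · have hji : j = i := idx (hSsub (ha ▸ haS)) hi
        subst hji; subst hb
        exact ⟨rfl, hbT.2.symm⟩
  · -- (3)
    intro i v hvi
    constructor
    · refine le_trans (Finset.card_le_card_of_injOn
        (t := ((H i).erase v).powerset) (fun x => x.2.erase v) ?_ ?_) ?_
      · intro x hx
        simp only [Finset.mem_coe, Finset.mem_filter, Finset.mem_sigma, Finset.mem_powerset] at hx
        obtain ⟨⟨-, hsub, -⟩, hv⟩ := hx
        have : x.1 = i := idx (hsub hv) hvi
        rw [Finset.mem_coe, Finset.mem_powerset]
        exact Finset.erase_subset_erase v (this ▸ hsub)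
      · intro x hx y hy hxy
        simp only [Finset.mem_coe, Finset.mem_filter, Finset.mem_sigma, Finset.mem_powerset] at hx hy
        have hx1 : x.1 = i := idx (hx.1.2.1 hx.2) hvi
        have hy1 : y.1 = i := idx (hy.1.2.1 hy.2) hvi
        simp only at hxy
        have h2 : x.2 = y.2 := by
          rw [← Finset.insert_erase hx.2, ← Finset.insert_erase hy.2, hxy]
        obtain ⟨x1, x2⟩ := x; obtain ⟨y1, y2⟩ := y
        simp only at hx1 hy1 h2
        subst hx1; subst hy1; subst h2; rfl
      · rw [Finset.card_powerset, Finset.card_erase_of_mem hvi]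
    · refine le_trans (Finset.card_le_card_of_injOn (fun x => x.1)
        (fun x _ => Finset.mem_univ x.1) ?_) (by simp)
      intro x hx y hy hxy
      simp only [Finset.mem_coe, Finset.mem_filter, Tset, Finset.mem_univ,
        true_and] at hx hy
      obtain ⟨x1, x2⟩ := x; obtain ⟨y1, y2⟩ := y
      simp only at hxy
      subst hxy
      have h2 : x2 = y2 := hx.2.symm.trans hy.2
      subst h2; rfl
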